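/- Let A, B be bounded self-adjoint positive operators on a Hilbert space. Then for any s ∈ [0,1], ‖A^s B^s‖ ≤ ‖AB‖^s. -/

import Mathlib

open scoped NNReal ENNReal

private lemma sr_mul_comm {A : Type*} [NormedRing A] [NormedAlgebra ℂ A] (a b : A) :
    spectralRadius ℂ (a * b) = spectralRadius ℂ (b * a) := by
  have key : ∀ x y : A, spectralRadius ℂ (x * y) ≤ spectralRadius ℂ (y * x) := by
    intro x y
    rw [spectralRadius, spectralRadius]
    apply iSup₂_le
    intro k hk
    rcases eq_or_ne k 0 with rfl | h
    · simp
    · have h2 := spectrum.nonzero_mul_comm (𝕜 := ℂ) x y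
      have h3 : k ∈ spectrum ℂ (y * x) \ {0} := h2 ▸ ⟨hk, h⟩
      exact le_iSup₂ (f := fun k (_ : k ∈ spectrum ℂ (y * x)) => (‖k‖₊ : ℝ≥0∞)) k h3.1
  exact le_antisymm (key a b) (key b a)

/-- For bounded positive self-adjoint operators `A, B` on a Hilbert space
and `s ∈ [0,1]`, `‖A^s B^s‖ ≤ ‖A B‖^s` (Löwner–Heinz / Bhatia IX.2.1-2). -/
theorem stmt_4 {H : Type*} [NormedAddCommGroup H] [InnerProductSpace ℂ H] [CompleteSpace H]
    (A B : H →L[ℂ] H) (hA : 0 ≤ A) (hB : 0 ≤ B)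
    (s : ℝ) (hs0 : 0 ≤ s) (hs1 : s ≤ 1) :
    ‖cfc (fun x : ℝ => x ^ s) A * cfc (fun x : ℝ => x ^ s) B‖ ≤ ‖A * B‖ ^ s := by
  rcases subsingleton_or_nontrivial H with hH | hH
  · have : (cfc (fun x : ℝ => x ^ s) A * cfc (fun x : ℝ => x ^ s) B) = 0 :=
      Subsingleton.elim _ _
    rw [this, norm_zero]
    exact Real.rpow_nonneg (norm_nonneg _) s
  -- Notation
  set P : ℝ → (H →L[ℂ] H) := fun u => cfc (fun x : ℝ => x ^ u) A with hP_def
  set Q : ℝ → (H →L[ℂ] H) := fun u => cfc (fun x : ℝ => x ^ u) B with hQ_def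
  set F : ℝ → ℝ := fun u => ‖P u * Q u‖ with hF_def
  set c : ℝ := ‖A * B‖ with hc_def
  set M : ℝ := (1 + ‖A‖) * (1 + ‖B‖) with hM_def
  have hc0 : 0 ≤ c := norm_nonneg _
  have hM1 : 1 ≤ M := by nlinarith [norm_nonneg A, norm_nonneg B]
  have hM0 : 0 ≤ M := by linarith
  have hF0 : ∀ t, 0 ≤ F t := fun t => norm_nonneg _
  have hPsa : ∀ u, IsSelfAdjoint (P u) := fun u => cfc_predicate _ _
  have hQsa : ∀ u, IsSelfAdjoint (Q u) := fun u => cfc_predicate _ _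
  have hcont : ∀ (u : ℝ), 0 ≤ u → ∀ (st : Set ℝ), ContinuousOn (fun x : ℝ => x ^ u) st :=
    fun u hu st x _ => (Real.continuousAt_rpow_const x u (.inr hu)).continuousWithinAt
  have hPadd : ∀ u v : ℝ, 0 ≤ u → 0 ≤ v → P u * P v = P (u + v) := by
    intro u v hu hv
    rw [hP_def]
    rw [← cfc_mul _ _ A (hcont u hu _) (hcont v hv _)]
    exact cfc_congr fun x hx =>
      (Real.rpow_add_of_nonneg (spectrum_nonneg_of_nonneg hA hx) hu hv).symm
  have hQadd : ∀ u v : ℝ, 0 ≤ u → 0 ≤ v → Q u * Q v = Q (u + v) := by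
    intro u v hu hv
    rw [hQ_def]
    rw [← cfc_mul _ _ B (hcont u hu _) (hcont v hv _)]
    exact cfc_congr fun x hx =>
      (Real.rpow_add_of_nonneg (spectrum_nonneg_of_nonneg hB hx) hu hv).symm
  have hP1 : P 1 = A := by
    rw [hP_def]; simp only [Real.rpow_one]; exact cfc_id' ℝ A (IsSelfAdjoint.of_nonneg hA)
  have hQ1 : Q 1 = B := by
    rw [hQ_def]; simp only [Real.rpow_one]; exact cfc_id' ℝ B (IsSelfAdjoint.of_nonneg hB)
  have hP0 : P 0 = 1 := by
    rw [hP_def]; simp only [Real.rpow_zero]; exact cfc_const_one ℝ A (IsSelfAdjoint.of_nonneg hA)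
  have hQ0 : Q 0 = 1 := by
    rw [hQ_def]; simp only [Real.rpow_zero]; exact cfc_const_one ℝ B (IsSelfAdjoint.of_nonneg hB)
  have hPnorm : ∀ u : ℝ, 0 ≤ u → u ≤ 1 → ‖P u‖ ≤ 1 + ‖A‖ := by
    intro u hu hu1
    have h1A : (1:ℝ) ≤ 1 + ‖A‖ := by linarith [norm_nonneg A]
    apply norm_cfc_le (by linarith)
    intro x hx
    have hx0 := spectrum_nonneg_of_nonneg hA hx
    rw [Real.norm_eq_abs, abs_of_nonneg (Real.rpow_nonneg hx0 u)]
    calc x ^ u ≤ (1 + ‖A‖) ^ u := by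
          apply Real.rpow_le_rpow hx0 ?_ hu
          calc x ≤ ‖x‖ := le_abs_self x
            _ ≤ ‖A‖ := spectrum.norm_le_norm_of_mem hx
            _ ≤ 1 + ‖A‖ := by linarith
      _ ≤ (1 + ‖A‖) ^ (1:ℝ) := Real.rpow_le_rpow_of_exponent_le h1A hu1
      _ = 1 + ‖A‖ := Real.rpow_one _
  have hQnorm : ∀ u : ℝ, 0 ≤ u → u ≤ 1 → ‖Q u‖ ≤ 1 + ‖B‖ := by
    intro u hu hu1
    have h1B : (1:ℝ) ≤ 1 + ‖B‖ := by linarith [norm_nonneg B]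
    apply norm_cfc_le (by linarith)
    intro x hx
    have hx0 := spectrum_nonneg_of_nonneg hB hx
    rw [Real.norm_eq_abs, abs_of_nonneg (Real.rpow_nonneg hx0 u)]
    calc x ^ u ≤ (1 + ‖B‖) ^ u := by
          apply Real.rpow_le_rpow hx0 ?_ hu
          calc x ≤ ‖x‖ := le_abs_self x
            _ ≤ ‖B‖ := spectrum.norm_le_norm_of_mem hx
            _ ≤ 1 + ‖B‖ := by linarith
      _ ≤ (1 + ‖B‖) ^ (1:ℝ) := Real.rpow_le_rpow_of_exponent_le h1B hu1
      _ = 1 + ‖B‖ := Real.rpow_one _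
  -- Key midpoint inequality: F((u+v)/2)^2 ≤ F u * F v
  have key : ∀ u v : ℝ, 0 ≤ u → 0 ≤ v → F ((u + v) / 2) ^ 2 ≤ F u * F v := by
    intro u v hu hv
    have hm : (0:ℝ) ≤ (u + v) / 2 := by positivity
    set m : ℝ := (u + v) / 2 with hm_def
    have hsum : m + m = u + v := by rw [hm_def]; ring
    have hXsa : star (P m * Q m) * (P m * Q m) = Q m * P (u + v) * Q m := by
      rw [star_mul, (hPsa m).star_eq, (hQsa m).star_eq, mul_assoc,
        ← mul_assoc (P m) (P m) (Q m), hPadd m m hm hm, hsum, ← mul_assoc]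
    have h1 : spectralRadius ℂ (Q m * P (u + v) * Q m)
        = spectralRadius ℂ ((Q v * P v) * (P u * Q u)) := by
      calc spectralRadius ℂ (Q m * P (u + v) * Q m)
          = spectralRadius ℂ (Q m * (Q m * P (u + v))) := sr_mul_comm _ _
        _ = spectralRadius ℂ (Q u * ((Q v * P v) * P u)) := by
            rw [← mul_assoc, hQadd m m hm hm, hsum, ← hQadd u v hu hv, add_comm u v,
              ← hPadd v u hv hu, mul_assoc, ← mul_assoc (Q v)]
        _ = spectralRadius ℂ (((Q v * P v) * P u) * Q u) := sr_mul_comm _ _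
        _ = spectralRadius ℂ ((Q v * P v) * (P u * Q u)) := by rw [mul_assoc]
    have h2 : (‖P m * Q m‖₊ * ‖P m * Q m‖₊ : ℝ≥0∞) ≤ (‖Q v * P v‖₊ * ‖P u * Q u‖₊ : ℝ≥0∞) := by
      calc (‖P m * Q m‖₊ * ‖P m * Q m‖₊ : ℝ≥0∞)
          = (‖star (P m * Q m) * (P m * Q m)‖₊ : ℝ≥0∞) := by
            rw [← ENNReal.coe_mul, ← CStarRing.nnnorm_star_mul_self]
        _ = spectralRadius ℂ (star (P m * Q m) * (P m * Q m)) :=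
            (IsSelfAdjoint.star_mul_self _).spectralRadius_eq_nnnorm.symm
        _ = spectralRadius ℂ ((Q v * P v) * (P u * Q u)) := by rw [hXsa, h1]
        _ ≤ (‖(Q v * P v) * (P u * Q u)‖₊ : ℝ≥0∞) := spectrum.spectralRadius_le_nnnorm (𝕜 := ℂ) _
        _ ≤ (‖Q v * P v‖₊ * ‖P u * Q u‖₊ : ℝ≥0∞) := by
            rw [← ENNReal.coe_mul]
            exact_mod_cast nnnorm_mul_le _ _
    have h2' : ‖P m * Q m‖ * ‖P m * Q m‖ ≤ ‖Q v * P v‖ * ‖P u * Q u‖ := by exact_mod_cast h2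
    have hQvPv : ‖Q v * P v‖ = F v := by
      rw [hF_def]
      calc ‖Q v * P v‖ = ‖star (P v * Q v)‖ := by
            rw [star_mul, (hPsa v).star_eq, (hQsa v).star_eq]
        _ = ‖P v * Q v‖ := norm_star _
    calc F m ^ 2 = ‖P m * Q m‖ * ‖P m * Q m‖ := pow_two _
      _ ≤ ‖Q v * P v‖ * ‖P u * Q u‖ := h2'
      _ = F u * F v := by rw [hQvPv]; exact mul_comm _ _
  -- Dyadic induction
  have main : ∀ n : ℕ, ∀ t : ℝ, 0 ≤ t → t ≤ 1 →
      ∃ k : ℕ, (k : ℝ) ≤ 2 ^ n * t ∧ 2 ^ n * t ≤ k + 1 ∧ F t ^ (2 ^ n : ℕ) ≤ c ^ k * M := by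
    intro n
    induction n with
    | zero =>
      intro t ht0 ht1
      refine ⟨0, by simpa using ht0, by simpa using ht1, ?_⟩
      simp only [pow_zero, pow_one, one_mul]
      calc F t ≤ ‖P t‖ * ‖Q t‖ := norm_mul_le _ _
        _ ≤ (1 + ‖A‖) * (1 + ‖B‖) :=
          mul_le_mul (hPnorm t ht0 ht1) (hQnorm t ht0 ht1) (norm_nonneg _)
            (by linarith [norm_nonneg A])
        _ = M := hM_def.symm
    | succ n ih =>
      intro t ht0 ht1
      rcases le_or_gt t (1/2) with htle | htgt
      · -- F t ^ 2 ≤ F (2t)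
        have hmid : (0 + 2 * t) / 2 = t := by ring
        have hkey := key 0 (2 * t) le_rfl (by linarith)
        rw [hmid] at hkey
        have hF02 : F 0 = 1 := by rw [hF_def]; simp only; rw [hP0, hQ0, mul_one, norm_one]
        rw [hF02, one_mul] at hkey
        obtain ⟨k, hk1, hk2, hk3⟩ := ih (2 * t) (by linarith) (by linarith)
        refine ⟨k, ?_, ?_, ?_⟩
        · calc (k:ℝ) ≤ 2 ^ n * (2 * t) := hk1
            _ = 2 ^ (n+1) * t := by ring
        · calc (2:ℝ) ^ (n+1) * t = 2 ^ n * (2 * t) := by ring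
            _ ≤ k + 1 := hk2
        · calc F t ^ (2 ^ (n+1) : ℕ) = (F t ^ 2) ^ (2 ^ n : ℕ) := by rw [pow_succ', pow_mul]
            _ ≤ F (2 * t) ^ (2 ^ n : ℕ) := pow_le_pow_left₀ (by positivity) hkey _
            _ ≤ c ^ k * M := hk3
      · -- F t ^ 2 ≤ c * F (2t - 1)
        have hmid : (1 + (2 * t - 1)) / 2 = t := by ring
        have hkey := key 1 (2 * t - 1) zero_le_one (by linarith)
        rw [hmid] at hkey
        have hF1 : F 1 = c := by rw [hF_def]; simp only; rw [hP1, hQ1]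
        rw [hF1] at hkey
        obtain ⟨k, hk1, hk2, hk3⟩ := ih (2 * t - 1) (by linarith) (by linarith)
        refine ⟨2 ^ n + k, ?_, ?_, ?_⟩
        · push_cast
          calc (2:ℝ) ^ n + k ≤ 2 ^ n + 2 ^ n * (2 * t - 1) := by linarith
            _ = 2 ^ (n+1) * t := by ring
        · push_cast
          calc (2:ℝ) ^ (n+1) * t = 2 ^ n + 2 ^ n * (2 * t - 1) := by ring
            _ ≤ 2 ^ n + (k + 1) := by linarith
            _ = 2 ^ n + k + 1 := by ring
        · calc F t ^ (2 ^ (n+1) : ℕ) = (F t ^ 2) ^ (2 ^ n : ℕ) := by rw [pow_succ', pow_mul]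
            _ ≤ (c * F (2 * t - 1)) ^ (2 ^ n : ℕ) :=
              pow_le_pow_left₀ (by positivity) hkey _
            _ = c ^ (2 ^ n : ℕ) * F (2 * t - 1) ^ (2 ^ n : ℕ) := mul_pow _ _ _
            _ ≤ c ^ (2 ^ n : ℕ) * (c ^ k * M) := by
              apply mul_le_mul_of_nonneg_left hk3 (by positivity)
            _ = c ^ (2 ^ n + k) * M := by rw [pow_add]; ring
  -- Conclusion
  show F s ≤ c ^ s
  rcases hs0.eq_or_lt with heq | hs0'
  · -- s = 0
    rw [← heq, Real.rpow_zero]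
    have : F 0 = 1 := by rw [hF_def]; simp only; rw [hP0, hQ0, mul_one, norm_one]
    rw [this]
  rcases hc0.eq_or_lt with hceq | hc'
  · -- c = 0, s > 0
    obtain ⟨n, hn⟩ := pow_unbounded_of_one_lt (1/s) (by norm_num : (1:ℝ) < 2)
    obtain ⟨k, hk1, hk2, hk3⟩ := main n s hs0 hs1
    have hn' : 1 < 2 ^ n * s := by
      rw [div_lt_iff₀ hs0'] at hn; linarith
    have hkpos : k ≠ 0 := by
      rintro rfl
      simp only [Nat.cast_zero, zero_add] at hk2
      linarith
    rw [← hceq, zero_pow hkpos, zero_mul] at hk3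
    have hFs : F s = 0 := by
      have := pow_nonneg (hF0 s) (2 ^ n)
      have hpow : F s ^ (2 ^ n : ℕ) = 0 := le_antisymm hk3 this
      exact pow_eq_zero_iff (by positivity) |>.mp hpow
    rw [hFs, ← hceq, Real.zero_rpow (ne_of_gt hs0')]
  · -- c > 0
    set K : ℝ := max 1 c⁻¹ with hK_def
    set L : ℝ := K * max 1 M with hL_def
    have hK1 : 1 ≤ K := le_max_left _ _
    have hL1 : 1 ≤ L := one_le_mul_of_one_le_of_one_le hK1 (le_max_left _ _)
    have bound : ∀ n : ℕ, F s ≤ c ^ s * L ^ (((2:ℝ) ^ n)⁻¹) := by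
      intro n
      obtain ⟨k, hk1, hk2, hk3⟩ := main n s hs0 hs1
      set N : ℝ := (2:ℝ) ^ n with hN_def
      have hN : (0:ℝ) < N := by positivity
      set e : ℝ := N⁻¹ with he_def
      have he : (0:ℝ) < e := by positivity
      have hcast : ((2 ^ n : ℕ) : ℝ) = N := by push_cast; rfl
      have hF1 : F s ≤ (c ^ k * M) ^ e := by
        have h := Real.rpow_le_rpow (pow_nonneg (hF0 s) _) hk3 he.le
        rwa [← Real.rpow_natCast (F s) (2 ^ n), ← Real.rpow_mul (hF0 s), hcast,
          mul_inv_cancel₀ (ne_of_gt hN), Real.rpow_one] at h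
      have hsplit : (c ^ k * M) ^ e = c ^ ((k:ℝ) * e) * M ^ e := by
        rw [Real.mul_rpow (pow_nonneg hc0 _) hM0, ← Real.rpow_natCast c k,
          ← Real.rpow_mul hc0]
      have hke_le : (k:ℝ) * e ≤ s := by
        have : (k:ℝ) * e ≤ (N * s) * e := by
          apply mul_le_mul_of_nonneg_right hk1 he.le
        rwa [mul_comm N s, mul_assoc, mul_inv_cancel₀ (ne_of_gt hN), mul_one] at this
      have hs_le : s ≤ (k:ℝ) * e + e := by
        have : N * s * e ≤ ((k:ℝ) + 1) * e := mul_le_mul_of_nonneg_right hk2 he.le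
        rw [mul_comm N s, mul_assoc, mul_inv_cancel₀ (ne_of_gt hN), mul_one] at this
        linarith [this, add_mul (k:ℝ) 1 e]
      have hcsplit : c ^ ((k:ℝ) * e) = c ^ s * c ^ ((k:ℝ) * e - s) := by
        rw [← Real.rpow_add hc']; ring_nf
      have hcbound : c ^ ((k:ℝ) * e - s) ≤ K ^ e := by
        have h1 : c ^ ((k:ℝ) * e - s) = (c⁻¹) ^ (s - (k:ℝ) * e) := by
          rw [Real.inv_rpow hc0, ← Real.rpow_neg hc0, neg_sub]
        rw [h1]
        calc (c⁻¹) ^ (s - (k:ℝ) * e) ≤ K ^ (s - (k:ℝ) * e) :=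
              Real.rpow_le_rpow (by positivity) (le_max_right _ _) (by linarith)
          _ ≤ K ^ e := Real.rpow_le_rpow_of_exponent_le hK1 (by linarith)
      have hMbound : M ^ e ≤ (max 1 M) ^ e :=
        Real.rpow_le_rpow hM0 (le_max_right _ _) he.le
      calc F s ≤ (c ^ k * M) ^ e := hF1
        _ = c ^ s * c ^ ((k:ℝ) * e - s) * M ^ e := by rw [hsplit, hcsplit]
        _ ≤ c ^ s * K ^ e * (max 1 M) ^ e := by
            apply mul_le_mul ?_ hMbound (Real.rpow_nonneg hM0 e) (by positivity)
            exact mul_le_mul_of_nonneg_left hcbound (Real.rpow_nonneg hc0 s)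
        _ = c ^ s * L ^ e := by
            rw [hL_def, Real.mul_rpow (by positivity) (by positivity), mul_assoc]
    have htend : Filter.Tendsto (fun n : ℕ => c ^ s * L ^ (((2:ℝ) ^ n)⁻¹))
        Filter.atTop (nhds (c ^ s)) := by
      have h1 : Filter.Tendsto (fun n : ℕ => ((2:ℝ) ^ n)⁻¹) Filter.atTop (nhds 0) := by
        simp only [← inv_pow]
        exact tendsto_pow_atTop_nhds_zero_of_lt_one (by norm_num) (by norm_num)
      have h2 : ContinuousAt (fun x : ℝ => L ^ x) 0 :=
        Real.continuousAt_const_rpow (by linarith : L ≠ 0)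
      have h3 := (h2.tendsto).comp h1
      rw [Real.rpow_zero] at h3
      simpa using Filter.Tendsto.mul (tendsto_const_nhds (x := c ^ s)) h3
    exact ge_of_tendsto' htend bound
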